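/- Let E be a real Banach space. If E is strictly convex, or if the dual space E* is strictly convex, then E is non-square. -/

import Mathlib

/-- If a real Banach space `E` is strictly convex, or its dual `E*` is strictly convex,
then `E` is non-square: for all unit vectors `x, y`, at least one of `‖x + y‖` and
`‖x - y‖` is strictly less than `2`. -/
theorem nonsquare_of_strictly_convex_or_dual_strictly_convex {E : Type*}
    [NormedAddCommGroup E] [NormedSpace ℝ E] [CompleteSpace E]
    (h : (∀ x y : E, x ≠ y → ‖x‖ = 1 → ‖y‖ = 1 → ‖x + y‖ < 2) ∨
      (∀ μ ν : StrongDual ℝ E, μ ≠ ν → ‖μ‖ = 1 → ‖ν‖ = 1 → ‖μ + ν‖ < 2)) :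
    ∀ x y : E, ‖x‖ = 1 → ‖y‖ = 1 → ‖x + y‖ < 2 ∨ ‖x - y‖ < 2 := by
  intro x y hx hy
  rcases h with h | h
  · by_cases hxy : x = y
    · right
      simp [hxy]
    · left
      exact h x y hxy hx hy
  · by_contra hc
    push_neg at hc
    obtain ⟨h1, h2⟩ := hc
    have hle1 : ‖x + y‖ ≤ 2 := by
      calc ‖x + y‖ ≤ ‖x‖ + ‖y‖ := norm_add_le x y
        _ = 2 := by rw [hx, hy]; norm_num
    have hle2 : ‖x - y‖ ≤ 2 := by
      calc ‖x - y‖ ≤ ‖x‖ + ‖y‖ := norm_sub_le x y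
        _ = 2 := by rw [hx, hy]; norm_num
    have he1 : ‖x + y‖ = 2 := le_antisymm hle1 h1
    have he2 : ‖x - y‖ = 2 := le_antisymm hle2 h2
    have hne1 : x + y ≠ 0 := by
      intro h0; rw [h0, norm_zero] at he1; norm_num at he1
    have hne2 : x - y ≠ 0 := by
      intro h0; rw [h0, norm_zero] at he2; norm_num at he2
    obtain ⟨μ, hμ, hμv⟩ := exists_dual_vector ℝ (x + y) (norm_ne_zero_iff.mpr hne1)
    obtain ⟨ν, hν, hνv⟩ := exists_dual_vector ℝ (x - y) (norm_ne_zero_iff.mpr hne2)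
    simp only [RCLike.ofReal_real_eq_id, id] at hμv hνv
    have bμx : μ x ≤ 1 := by
      calc μ x ≤ ‖μ x‖ := le_abs_self _
        _ ≤ ‖μ‖ * ‖x‖ := μ.le_opNorm x
        _ = 1 := by rw [hμ, hx]; ring
    have bμy : μ y ≤ 1 := by
      calc μ y ≤ ‖μ y‖ := le_abs_self _
        _ ≤ ‖μ‖ * ‖y‖ := μ.le_opNorm y
        _ = 1 := by rw [hμ, hy]; ring
    have bνy : -(ν y) ≤ 1 := by
      calc -(ν y) ≤ ‖ν y‖ := neg_le_abs _
        _ ≤ ‖ν‖ * ‖y‖ := ν.le_opNorm y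
        _ = 1 := by rw [hν, hy]; ring
    have hμadd : μ x + μ y = 2 := by
      have := hμv; rw [map_add] at this; rw [this, he1]
    have hνsub : ν x - ν y = 2 := by
      have := hνv; rw [map_sub] at this; rw [this, he2]
    have hμy : μ y = 1 := by linarith
    have hνy : ν y = -1 := by
      have bνx : ν x ≤ 1 := by
        calc ν x ≤ ‖ν x‖ := le_abs_self _
          _ ≤ ‖ν‖ * ‖x‖ := ν.le_opNorm x
          _ = 1 := by rw [hν, hx]; ring
      linarith
    have hμν : μ ≠ ν := by
      intro hE
      rw [hE, hνy] at hμy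
      norm_num at hμy
    have hlt := h μ ν hμν hμ hν
    have hμx : μ x = 1 := by linarith
    have hνx : ν x = 1 := by linarith
    have : (2 : ℝ) ≤ ‖μ + ν‖ := by
      have h2 : (μ + ν) x = 2 := by
        simp [hμx, hνx]; norm_num
      calc (2:ℝ) = ‖(μ + ν) x‖ := by rw [h2]; norm_num
        _ ≤ ‖μ + ν‖ * ‖x‖ := (μ + ν).le_opNorm x
        _ = ‖μ + ν‖ := by rw [hx, mul_one]
    linarith
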